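/- Let G be a finite group and suppose there exist automorphisms α, β of G such that the set S := {g ∈ G | α(g) = g·β(g)} has cardinality greater than (3/4)·|G|. Then G is abelian. -/
import Mathlib

theorem subgroup_ncard_eq {G : Type*} [Group G] (H : Subgroup G) :
    (H : Set G).ncard = Nat.card H := by
  rw [← Nat.card_coe_set_eq]; rfl

/-- If automorphisms `α, β` of a finite group `G` satisfy `α g = g * β g` for more
than `3/4` of the elements `g` of `G`, then `G` is abelian. -/
theorem stmt_14 {G : Type*} [Group G] [Finite G] (α β : G ≃* G)
    (h : (3 / 4 : ℚ) * Nat.card G < Nat.card {g : G | α g = g * β g}) :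
    ∀ a b : G, a * b = b * a := by
  set S : Set G := {g : G | α g = g * β g} with hS
  have hn : 0 < Nat.card G := Nat.card_pos
  have hnum : 3 * Nat.card G < 4 * Nat.card S := by
    have := mul_lt_mul_of_pos_left h (by norm_num : (0:ℚ) < 4)
    rw [show (4:ℚ) * ((3/4) * Nat.card G) = 3 * Nat.card G by ring] at this
    exact_mod_cast this
  rw [Nat.card_coe_set_eq] at hnum
  -- the key algebraic step: if g, x, g*x ∈ S then β g commutes with x
  have key : ∀ g x : G, g ∈ S → x ∈ S → g * x ∈ S → β g * x = x * β g := by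
    intro g x hg hx hgx
    have h1 : α g = g * β g := hg
    have h2 : α x = x * β x := hx
    have h3 : α (g * x) = (g * x) * β (g * x) := hgx
    simp only [map_mul] at h3
    rw [h1, h2] at h3
    -- g * β g * (x * β x) = g * x * (β g * β x)
    have h4 : β g * (x * β x) = x * (β g * β x) := by
      rw [mul_assoc, mul_assoc] at h3
      exact mul_left_cancel h3
    rw [← mul_assoc, ← mul_assoc] at h4
    exact mul_right_cancel h4
  -- every element of S is central
  have hcen : ∀ x ∈ S, x ∈ Subgroup.center G := by
    intro x hx
    set H : Subgroup G := Subgroup.comap β.toMonoidHom (Subgroup.centralizer {x}) with hH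
    set S' : Set G := (fun g => g * x⁻¹) '' S with hS'
    have hS'card : S'.ncard = S.ncard :=
      Set.ncard_image_of_injective _ (fun a b hab => by simpa using hab)
    have hsub : S ∩ S' ⊆ (H : Set G) := by
      rintro g ⟨hg, g', hg', rfl⟩
      have hgx : (g' * x⁻¹) * x ∈ S := by simpa using hg'
      have := key (g' * x⁻¹) x hg hx hgx
      simp only [hH, SetLike.mem_coe, Subgroup.mem_comap,
        Subgroup.mem_centralizer_singleton_iff]
      simpa using this
    have hUnion : (S ∪ S').ncard + (S ∩ S').ncard = S.ncard + S'.ncard :=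
      Set.ncard_union_add_ncard_inter S S' (Set.toFinite S) (Set.toFinite S')
    have hUle : (S ∪ S').ncard ≤ Nat.card G := by
      rw [← Set.ncard_univ]
      exact Set.ncard_le_ncard (Set.subset_univ _) (Set.toFinite _)
    have hHcard : 2 * Nat.card H > Nat.card G := by
      have h1 : (S ∩ S').ncard ≤ Nat.card H := by
        rw [← subgroup_ncard_eq]
        exact Set.ncard_le_ncard hsub (Set.toFinite _)
      omega
    have hHtop : H = ⊤ := by
      apply Subgroup.eq_top_of_card_eq
      obtain ⟨k, hk⟩ := Subgroup.card_subgroup_dvd_card H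
      have hk0 : 0 < Nat.card H := Nat.card_pos
      have hk2 : k < 2 := by nlinarith
      interval_cases k <;> omega
    rw [Subgroup.mem_center_iff]
    intro g
    obtain ⟨g', rfl⟩ := β.surjective g
    have : g' ∈ H := hHtop ▸ Subgroup.mem_top g'
    simpa [hH, Subgroup.mem_comap, Subgroup.mem_centralizer_singleton_iff] using this
  -- so the center is large, hence everything
  have hZ : 2 * Nat.card (Subgroup.center G) > Nat.card G := by
    have h1 : S.ncard ≤ Nat.card (Subgroup.center G) := by
      rw [← subgroup_ncard_eq]
      exact Set.ncard_le_ncard hcen (Set.toFinite _)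
    omega
  have htop : Subgroup.center G = ⊤ := by
    apply Subgroup.eq_top_of_card_eq
    obtain ⟨k, hk⟩ := Subgroup.card_subgroup_dvd_card (Subgroup.center G)
    have hk0 : 0 < Nat.card (Subgroup.center G) := Nat.card_pos
    have hk2 : k < 2 := by nlinarith
    interval_cases k <;> omega
  intro a b
  have : a ∈ Subgroup.center G := htop ▸ Subgroup.mem_top a
  exact (Subgroup.mem_center_iff.mp this b).symm
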